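/- Let (X,Y) be a pair of random variables with values in ℝ^d × ℝ^k, let f : ℝ^d → ℝ^k be measurable, and suppose ℓ, A, B : ℝ^k × ℝ^k → ℝ≥0 satisfy ℓ(u,v) + ℓ(u',v') + A(v,v') ≥ B(u,u') for all u,v,u',v'. Then R(f) + R_ε(f) ≥ E[sup_{‖Δ‖≤ε} B(f(X), f(X+Δ))], where R(f) = E[ℓ(f(X),Y)] and R_ε(f) = E[sup_{‖Δ‖≤ε} ℓ(f(X+Δ),Y)], provided A(u,u) = 0 for all u and all expectations are finite. -/
import Mathlib

open MeasureTheory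

/-- First lower bound of the main theorem: if `ℓ u v + ℓ u' v' + A v v' ≥ B u u'` and
`A(u,u) = 0`, then `R(f) + R_ε(f) ≥ E[sup_{‖Δ‖ ≤ ε} B (f X) (f (X + Δ))]`. -/
theorem risk_tradeoff_smoothness {Ω : Type*} [MeasureSpace Ω]
    [IsProbabilityMeasure (volume : Measure Ω)]
    {E : Type*} [NormedAddCommGroup E] [MeasurableSpace E] {k : ℕ}
    (X : Ω → E) (Y : Ω → (Fin k → ℝ)) (hX : Measurable X) (hY : Measurable Y)
    (f : E → (Fin k → ℝ)) (hf : Measurable f)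
    (ℓ A B : (Fin k → ℝ) → (Fin k → ℝ) → ℝ)
    (hℓ : ∀ u v, 0 ≤ ℓ u v) (hA : ∀ u v, 0 ≤ A u v) (hB : ∀ u v, 0 ≤ B u v)
    (hA0 : ∀ u, A u u = 0)
    (hcomp : ∀ u v u' v', ℓ u v + ℓ u' v' + A v v' ≥ B u u')
    (ε : ℝ) (hε : 0 ≤ ε)
    (hR : Integrable (fun ω => ℓ (f (X ω)) (Y ω)))
    (hRε : Integrable (fun ω => ⨆ Δ : {Δ : E // ‖Δ‖ ≤ ε}, ℓ (f (X ω + ↑Δ)) (Y ω)))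
    (hBint : Integrable (fun ω => ⨆ Δ : {Δ : E // ‖Δ‖ ≤ ε}, B (f (X ω)) (f (X ω + ↑Δ)))) 
    (hbdd : ∀ ω, BddAbove (Set.range fun Δ : {Δ : E // ‖Δ‖ ≤ ε} => ℓ (f (X ω + ↑Δ)) (Y ω))) :
    (∫ ω, ℓ (f (X ω)) (Y ω)) + (∫ ω, ⨆ Δ : {Δ : E // ‖Δ‖ ≤ ε}, ℓ (f (X ω + ↑Δ)) (Y ω))
      ≥ ∫ ω, ⨆ Δ : {Δ : E // ‖Δ‖ ≤ ε}, B (f (X ω)) (f (X ω + ↑Δ)) := by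
  haveI : Nonempty {Δ : E // ‖Δ‖ ≤ ε} := ⟨⟨0, by simpa using hε⟩⟩
  rw [← integral_add hR hRε]
  apply integral_mono hBint (hR.add hRε)
  intro ω
  apply ciSup_le
  intro Δ
  have := hcomp (f (X ω)) (Y ω) (f (X ω + ↑Δ)) (Y ω)
  rw [hA0, add_zero] at this
  calc B (f (X ω)) (f (X ω + ↑Δ)) ≤ ℓ (f (X ω)) (Y ω) + ℓ (f (X ω + ↑Δ)) (Y ω) := this
    _ ≤ _ := add_le_add le_rfl (le_ciSup (hbdd ω) Δ)
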